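/- With the notation and assumptions of the Gaussian KL decomposition for product measures: D(Q ‖ Q*) ≤ (max_j Γ_{jj} / λ_min(Γ)) · [D(Q ‖ N(μ, Γ^{-1})) - D(Q* ‖ N(μ, Γ^{-1}))], where Q* = N(μ, (diag Γ)^{-1}). In particular, Q* minimizes D(Q ‖ N(μ, Γ^{-1})) over all product measures Q = ⨂_j Q_j. -/

import Mathlib

open MeasureTheory Matrix

/-- Density of the one-dimensional normal distribution `N(m, s2)`. -/
noncomputable def gaussPDF (m s2 x : ℝ) : ℝ :=
  Real.exp (-(x - m) ^ 2 / (2 * s2)) / Real.sqrt (2 * Real.pi * s2)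

/-- Density of the multivariate normal `N(μ, Γ⁻¹)` with precision matrix `Γ`. -/
noncomputable def mvGaussPDF {d : ℕ} (μ : Fin d → ℝ) (Γ : Matrix (Fin d) (Fin d) ℝ)
    (θ : Fin d → ℝ) : ℝ :=
  Real.sqrt (Γ.det / (2 * Real.pi) ^ d) *
    Real.exp (-(1 / 2) * ((θ - μ) ⬝ᵥ Γ.mulVec (θ - μ)))

open Real

namespace KLaux
section A


variable {m s2 : ℝ}

lemma gaussPDF_pos (hs2 : 0 < s2) (x : ℝ) : 0 < gaussPDF m s2 x := by
  have : 0 < Real.sqrt (2 * Real.pi * s2) :=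
    Real.sqrt_pos.2 (by positivity)
  exact div_pos (Real.exp_pos _) this

lemma gaussPDF_eq (hs2 : 0 < s2) (x : ℝ) :
    gaussPDF m s2 x = (Real.sqrt (2 * Real.pi * s2))⁻¹ * Real.exp (-(2*s2)⁻¹ * (x - m) ^ 2) := by
  rw [gaussPDF, div_eq_inv_mul]
  congr 1
  rw [div_eq_mul_inv]
  ring

lemma gaussPDF_eq_gaussianPDFReal (hs2 : 0 < s2) :
    gaussPDF m s2 = ProbabilityTheory.gaussianPDFReal m ⟨s2, hs2.le⟩ := by
  funext x
  delta gaussPDF ProbabilityTheory.gaussianPDFReal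
  rw [div_eq_inv_mul]
  norm_num
  rfl

lemma integrable_gaussPDF (hs2 : 0 < s2) : Integrable (gaussPDF m s2) := by
  rw [gaussPDF_eq_gaussianPDFReal hs2]
  exact ProbabilityTheory.integrable_gaussianPDFReal _ _

lemma integral_gaussPDF (hs2 : 0 < s2) : ∫ x, gaussPDF m s2 x = 1 := by
  rw [gaussPDF_eq_gaussianPDFReal hs2]
  exact ProbabilityTheory.integral_gaussianPDFReal_eq_one m
    (fun h => hs2.ne' (congrArg Subtype.val h))

lemma integrable_sub_mul_gaussPDF (hs2 : 0 < s2) :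
    Integrable (fun x => (x - m) * gaussPDF m s2 x) := by
  have h1 : Integrable (fun y : ℝ => y * ((Real.sqrt (2 * Real.pi * s2))⁻¹
      * Real.exp (-(2*s2)⁻¹ * y ^ 2))) := by
    have := (integrable_mul_exp_neg_mul_sq (b := (2*s2)⁻¹) (by positivity)).const_mul
      ((Real.sqrt (2 * Real.pi * s2))⁻¹)
    refine this.congr ?_
    · filter_upwards with x; ring
  have h2 := h1.comp_sub_right m
  refine h2.congr ?_
  filter_upwards with x
  rw [gaussPDF_eq hs2]

lemma integrable_sub_sq_mul_gaussPDF (hs2 : 0 < s2) :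
    Integrable (fun x => (x - m) ^ 2 * gaussPDF m s2 x) := by
  have h0 : Integrable (fun y : ℝ => y ^ (2:ℝ) * Real.exp (-(2*s2)⁻¹ * y ^ 2)) :=
    integrable_rpow_mul_exp_neg_mul_sq (by positivity) (by norm_num)
  have h1 : Integrable (fun y : ℝ => y ^ 2 * ((Real.sqrt (2 * Real.pi * s2))⁻¹
      * Real.exp (-(2*s2)⁻¹ * y ^ 2))) := by
    refine (h0.const_mul ((Real.sqrt (2 * Real.pi * s2))⁻¹)).congr ?_
    filter_upwards with x
    rw [← Real.rpow_natCast x 2]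
    push_cast
    ring
  have h2 := h1.comp_sub_right m
  refine h2.congr ?_
  filter_upwards with x
  rw [gaussPDF_eq hs2]

lemma integral_sub_mul_gaussPDF (hs2 : 0 < s2) :
    ∫ x, (x - m) * gaussPDF m s2 x = 0 := by
  have hshift : ∫ x, (x - m) * gaussPDF m s2 x
      = ∫ y, y * ((Real.sqrt (2 * Real.pi * s2))⁻¹ * Real.exp (-(2*s2)⁻¹ * y ^ 2)) := by
    rw [← integral_sub_right_eq_self
      (fun y : ℝ => y * ((Real.sqrt (2 * Real.pi * s2))⁻¹ * Real.exp (-(2*s2)⁻¹ * y ^ 2))) m]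
    congr 1
    funext x
    rw [gaussPDF_eq hs2]
  rw [hshift]
  set f : ℝ → ℝ := fun y => y * ((Real.sqrt (2 * Real.pi * s2))⁻¹ * Real.exp (-(2*s2)⁻¹ * y ^ 2))
    with hf
  have hodd : ∀ y, f (-y) = - f y := by
    intro y; simp only [hf]; ring_nf
  have h1 : ∫ y, f (-y) = ∫ y, f y := by
    exact integral_neg_eq_self f volume
  have h2 : ∫ y, f (-y) = - ∫ y, f y := by
    simp_rw [hodd]
    exact integral_neg f
  linarith [h1, h2]


end A
section B
lemma log_gaussPDF (hs2 : 0 < s2) (x : ℝ) :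
    Real.log (gaussPDF m s2 x)
      = -(x - m) ^ 2 / (2 * s2) - Real.log (Real.sqrt (2 * Real.pi * s2)) := by
  rw [gaussPDF, Real.log_div (Real.exp_ne_zero _)
    (Real.sqrt_ne_zero'.2 (by positivity)), Real.log_exp]

lemma mul_log_div_gauss (hs2 : 0 < s2) (q : ℝ → ℝ) (hq0 : ∀ x, 0 ≤ q x) (c x : ℝ) :
    q x * Real.log (q x / gaussPDF c s2 x)
      = q x * Real.log (q x)
        + ((2 * s2)⁻¹ * ((x - c) ^ 2 * q x)
          + Real.log (Real.sqrt (2 * Real.pi * s2)) * q x) := by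
  rcases eq_or_lt_of_le (hq0 x) with h | h
  · simp [← h]
  · rw [Real.log_div h.ne' (gaussPDF_pos hs2 x).ne', log_gaussPDF hs2]
    field_simp
    ring

lemma integrable_sub_sq_mul (q : ℝ → ℝ) (hqInt : Integrable q)
    (hm1 : Integrable (fun x => x * q x)) (hm2 : Integrable (fun x => x ^ 2 * q x)) (c : ℝ) :
    Integrable (fun x => (x - c) ^ 2 * q x) := by
  have h : Integrable (fun x => (x ^ 2 * q x - 2 * c * (x * q x)) + c ^ 2 * q x) :=
    (hm2.sub (hm1.const_mul (2 * c))).add (hqInt.const_mul (c ^ 2))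
  refine h.congr ?_
  filter_upwards with x
  ring

lemma integral_sub_sq_mul (q : ℝ → ℝ) (hqInt : Integrable q) (hq1 : ∫ x, q x = 1)
    (hm1 : Integrable (fun x => x * q x)) (hm2 : Integrable (fun x => x ^ 2 * q x)) (c : ℝ) :
    ∫ x, (x - c) ^ 2 * q x
      = (∫ x, x ^ 2 * q x) - 2 * c * (∫ x, x * q x) + c ^ 2 := by
  have h : (fun x => (x - c) ^ 2 * q x)
      = fun x => (x ^ 2 * q x - 2 * c * (x * q x)) + c ^ 2 * q x := by
    funext x; ring
  have I1 : Integrable (fun x => x ^ 2 * q x - 2 * c * (x * q x)) :=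
    hm2.sub (hm1.const_mul (2 * c))
  have I2 : Integrable (fun x => c ^ 2 * q x) := hqInt.const_mul (c ^ 2)
  rw [h, integral_add I1 I2, integral_sub hm2 (hm1.const_mul (2 * c)),
    integral_const_mul, integral_const_mul, hq1]
  ring

lemma integrable_mul_log_div_gauss (hs2 : 0 < s2) (q : ℝ → ℝ) (hq0 : ∀ x, 0 ≤ q x)
    (hqInt : Integrable q)
    (hm1 : Integrable (fun x => x * q x)) (hm2 : Integrable (fun x => x ^ 2 * q x))
    (hent : Integrable (fun x => q x * Real.log (q x))) (c : ℝ) :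
    Integrable (fun x => q x * Real.log (q x / gaussPDF c s2 x)) := by
  have h : Integrable (fun x => q x * Real.log (q x)
      + ((2 * s2)⁻¹ * ((x - c) ^ 2 * q x)
        + Real.log (Real.sqrt (2 * Real.pi * s2)) * q x)) :=
    hent.add (((integrable_sub_sq_mul q hqInt hm1 hm2 c).const_mul
      ((2 * s2)⁻¹)).add (hqInt.const_mul (Real.log (Real.sqrt (2 * Real.pi * s2)))))
  refine h.congr ?_
  filter_upwards with x
  exact (mul_log_div_gauss hs2 q hq0 c x).symm

lemma integral_mul_log_div_gauss (hs2 : 0 < s2) (q : ℝ → ℝ) (hq0 : ∀ x, 0 ≤ q x)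
    (hqInt : Integrable q) (hq1 : ∫ x, q x = 1)
    (hm1 : Integrable (fun x => x * q x)) (hm2 : Integrable (fun x => x ^ 2 * q x))
    (hent : Integrable (fun x => q x * Real.log (q x))) (c : ℝ) :
    ∫ x, q x * Real.log (q x / gaussPDF c s2 x)
      = (∫ x, q x * Real.log (q x))
        + ((2 * s2)⁻¹ * ((∫ x, x ^ 2 * q x) - 2 * c * (∫ x, x * q x) + c ^ 2)
          + Real.log (Real.sqrt (2 * Real.pi * s2))) := by
  have h : (fun x => q x * Real.log (q x / gaussPDF c s2 x))
      = fun x => q x * Real.log (q x)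
        + (((2 * s2)⁻¹) * ((x - c) ^ 2 * q x)
          + Real.log (Real.sqrt (2 * Real.pi * s2)) * q x) := by
    funext x; exact mul_log_div_gauss hs2 q hq0 c x
  have I0 : Integrable (fun x => (x - c) ^ 2 * q x) := integrable_sub_sq_mul q hqInt hm1 hm2 c
  have I1 : Integrable (fun x => ((2 * s2)⁻¹) * ((x - c) ^ 2 * q x)) := I0.const_mul _
  have I2 : Integrable (fun x => Real.log (Real.sqrt (2 * Real.pi * s2)) * q x) :=
    hqInt.const_mul _
  have I12 : Integrable (fun x => ((2 * s2)⁻¹) * ((x - c) ^ 2 * q x)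
      + Real.log (Real.sqrt (2 * Real.pi * s2)) * q x) := I1.add I2
  rw [h, integral_add hent I12, integral_add I1 I2, integral_const_mul,
    integral_const_mul, integral_sub_sq_mul q hqInt hq1 hm1 hm2 c, hq1, mul_one]

lemma gibbs_pointwise {a b : ℝ} (ha : 0 ≤ a) (hb : 0 < b) : a - b ≤ a * Real.log (a / b) := by
  rcases eq_or_lt_of_le ha with h | h
  · simp [← h]
    exact hb.le
  · have h1 : Real.log (b / a) ≤ b / a - 1 := Real.log_le_sub_one_of_pos (div_pos hb h)
    have h2 : Real.log (a / b) = - Real.log (b / a) := by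
      rw [← Real.log_inv]
      congr 1
      field_simp
    have h3 : a * (b / a) = b := by field_simp
    have h4 := mul_le_mul_of_nonneg_left h1 h.le
    rw [h2, mul_neg]
    nlinarith
  
lemma gibbs_nonneg (hs2 : 0 < s2) (q : ℝ → ℝ) (hq0 : ∀ x, 0 ≤ q x)
    (hqInt : Integrable q) (hq1 : ∫ x, q x = 1)
    (hm1 : Integrable (fun x => x * q x)) (hm2 : Integrable (fun x => x ^ 2 * q x))
    (hent : Integrable (fun x => q x * Real.log (q x))) (c : ℝ) :
    0 ≤ ∫ x, q x * Real.log (q x / gaussPDF c s2 x) := by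
  have If : Integrable (fun x => q x - gaussPDF c s2 x) :=
    hqInt.sub (integrable_gaussPDF hs2)
  have hmono := integral_mono If
    (integrable_mul_log_div_gauss hs2 q hq0 hqInt hm1 hm2 hent c)
    (fun x => gibbs_pointwise (hq0 x) (gaussPDF_pos hs2 x))
  have hz : ∫ x, (q x - gaussPDF c s2 x) = 0 := by
    rw [integral_sub hqInt (integrable_gaussPDF hs2), hq1, integral_gaussPDF hs2, sub_self]
  rw [hz] at hmono
  exact hmono

lemma oneDimKL (hs2 : 0 < s2) (q : ℝ → ℝ) (hq0 : ∀ x, 0 ≤ q x)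
    (hqInt : Integrable q) (hq1 : ∫ x, q x = 1)
    (hm1 : Integrable (fun x => x * q x)) (hm2 : Integrable (fun x => x ^ 2 * q x))
    (hent : Integrable (fun x => q x * Real.log (q x))) (m0 : ℝ) :
    ((∫ x, x * q x) - m0) ^ 2 / (2 * s2)
      ≤ ∫ x, q x * Real.log (q x / gaussPDF m0 s2 x) := by
  set mq := ∫ x, x * q x with hmq
  have h0 := gibbs_nonneg hs2 q hq0 hqInt hq1 hm1 hm2 hent mq
  rw [integral_mul_log_div_gauss hs2 q hq0 hqInt hq1 hm1 hm2 hent m0, ← hmq]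
  rw [integral_mul_log_div_gauss hs2 q hq0 hqInt hq1 hm1 hm2 hent mq, ← hmq] at h0
  have hs2' : (0:ℝ) < (2 * s2)⁻¹ := by positivity
  have key : (mq - m0) ^ 2 / (2 * s2) = (2 * s2)⁻¹ * ((mq - m0) ^ 2) := by
    field_simp
  rw [key]
  nlinarith [h0, sq_nonneg (mq - m0)]


end B
section C


variable {d : ℕ} (p : Fin d → ℝ → ℝ) (μ : Fin d → ℝ)

lemma single_prod_eq (w : ℝ → ℝ) (j : Fin d) (θ : Fin d → ℝ) :
    (∏ k, ((if k = j then w (θ k) else 1) * p k (θ k)))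
      = w (θ j) * ∏ k, p k (θ k) := by
  rw [Finset.prod_mul_distrib, Finset.prod_ite_eq' Finset.univ j (fun k => w (θ k))]
  simp

lemma integrable_single_prod (w : ℝ → ℝ) (j : Fin d)
    (hw : Integrable (fun x => w x * p j x)) (hInt : ∀ k, Integrable (p k)) :
    Integrable (fun θ : Fin d → ℝ => w (θ j) * ∏ k, p k (θ k)) := by
  have h : Integrable (fun θ : Fin d → ℝ =>
      ∏ k, ((if k = j then w (θ k) else 1) * p k (θ k))) := by
    apply Integrable.fintype_prod (f := fun k x => (if k = j then w x else 1) * p k x)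
    intro k
    by_cases hk : k = j
    · subst hk; simpa using hw
    · simp only [hk, if_false, one_mul]
      exact hInt k
  refine h.congr ?_
  filter_upwards with θ
  exact single_prod_eq p w j θ

lemma integral_single_prod (w : ℝ → ℝ) (j : Fin d)
    (hw : Integrable (fun x => w x * p j x)) (hInt : ∀ k, Integrable (p k))
    (hp1 : ∀ k, ∫ x, p k x = 1) :
    ∫ θ : Fin d → ℝ, w (θ j) * ∏ k, p k (θ k) = ∫ x, w x * p j x := by
  have h : (fun θ : Fin d → ℝ => w (θ j) * ∏ k, p k (θ k))
      = fun θ : Fin d → ℝ => ∏ k, ((if k = j then w (θ k) else 1) * p k (θ k)) := by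
    funext θ; exact (single_prod_eq p w j θ).symm
  rw [h, integral_fintype_prod_volume_eq_prod (f := fun k x => (if k = j then w x else 1) * p k x)]
  have hval : ∀ k, (∫ x, (if k = j then w x else 1) * p k x)
      = if k = j then ∫ x, w x * p j x else 1 := by
    intro k
    by_cases hk : k = j
    · subst hk; simp
    · simp only [hk, if_false, one_mul]
      exact hp1 k
  rw [Finset.prod_congr rfl (fun k _ => hval k), Finset.prod_ite_eq' Finset.univ j
    (fun _ => ∫ x, w x * p j x)]
  simp

lemma pair_prod_eq (i j : Fin d) (θ : Fin d → ℝ) :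
    (∏ k, ((if k = i then θ k - μ i else 1) * ((if k = j then θ k - μ j else 1) * p k (θ k))))
      = (θ i - μ i) * ((θ j - μ j) * ∏ k, p k (θ k)) := by
  rw [Finset.prod_mul_distrib, Finset.prod_mul_distrib,
    Finset.prod_ite_eq' Finset.univ i (fun k => θ k - μ i),
    Finset.prod_ite_eq' Finset.univ j (fun k => θ k - μ j)]
  simp [mul_assoc]

lemma integrable_pair_factor (i j k : Fin d)
    (hInt : ∀ k, Integrable (p k))
    (hM1 : ∀ k, Integrable (fun x => (x - μ k) * p k x))
    (hM2 : ∀ k, Integrable (fun x => (x - μ k) * ((x - μ k) * p k x))) :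
    Integrable (fun x => (if k = i then x - μ i else 1)
      * ((if k = j then x - μ j else 1) * p k x)) := by
  by_cases hki : k = i <;> by_cases hkj : k = j
  · subst hki; subst hkj; simpa using hM2 k
  · subst hki; simp only [hkj, if_false, if_pos rfl, one_mul]
    simpa using hM1 k
  · subst hkj; simp only [hki, if_false, if_pos rfl, one_mul]
    exact hM1 k
  · simp only [hki, hkj, if_false, one_mul]
    exact hInt k

lemma integrable_pair_prod (i j : Fin d)
    (hInt : ∀ k, Integrable (p k))
    (hM1 : ∀ k, Integrable (fun x => (x - μ k) * p k x))
    (hM2 : ∀ k, Integrable (fun x => (x - μ k) * ((x - μ k) * p k x))) :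
    Integrable (fun θ : Fin d → ℝ => (θ i - μ i) * ((θ j - μ j) * ∏ k, p k (θ k))) := by
  have h : Integrable (fun θ : Fin d → ℝ =>
      ∏ k, ((if k = i then θ k - μ i else 1) * ((if k = j then θ k - μ j else 1) * p k (θ k)))) := by
    apply Integrable.fintype_prod (f := fun k x =>
      (if k = i then x - μ i else 1) * ((if k = j then x - μ j else 1) * p k x))
    intro k
    exact integrable_pair_factor p μ i j k hInt hM1 hM2
  refine h.congr ?_
  filter_upwards with θ
  exact pair_prod_eq p μ i j θ

lemma integral_pair_prod {i j : Fin d} (hij : i ≠ j)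
    (hInt : ∀ k, Integrable (p k))
    (hM1 : ∀ k, Integrable (fun x => (x - μ k) * p k x))
    (hM2 : ∀ k, Integrable (fun x => (x - μ k) * ((x - μ k) * p k x)))
    (hp1 : ∀ k, ∫ x, p k x = 1) :
    ∫ θ : Fin d → ℝ, (θ i - μ i) * ((θ j - μ j) * ∏ k, p k (θ k))
      = (∫ x, (x - μ i) * p i x) * ∫ x, (x - μ j) * p j x := by
  have h : (fun θ : Fin d → ℝ => (θ i - μ i) * ((θ j - μ j) * ∏ k, p k (θ k)))
      = fun θ : Fin d → ℝ =>
        ∏ k, ((if k = i then θ k - μ i else 1) * ((if k = j then θ k - μ j else 1) * p k (θ k))) := by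
    funext θ; exact (pair_prod_eq p μ i j θ).symm
  rw [h, integral_fintype_prod_volume_eq_prod (f := fun k x =>
    (if k = i then x - μ i else 1) * ((if k = j then x - μ j else 1) * p k x))]
  have hval : ∀ k, (∫ x, (if k = i then x - μ i else 1) * ((if k = j then x - μ j else 1) * p k x))
      = (if k = i then ∫ x, (x - μ i) * p i x else 1)
        * (if k = j then ∫ x, (x - μ j) * p j x else 1) := by
    intro k
    by_cases hki : k = i <;> by_cases hkj : k = j
    · exact absurd (hki ▸ hkj) hij
    · subst hki; simp only [hkj, if_false, if_pos rfl, one_mul, mul_one]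
      simp
    · subst hkj; simp only [hki, if_false, if_pos rfl, one_mul]
      exact hp1 k ▸ by simp [hp1 k]
    · simp only [hki, hkj, if_false, one_mul, mul_one]
      exact hp1 k
  rw [Finset.prod_congr rfl (fun k _ => hval k), Finset.prod_mul_distrib,
    Finset.prod_ite_eq' Finset.univ i (fun _ => ∫ x, (x - μ i) * p i x),
    Finset.prod_ite_eq' Finset.univ j (fun _ => ∫ x, (x - μ j) * p j x)]
  simp

lemma integral_prod_eq_one (hInt : ∀ k, Integrable (p k)) (hp1 : ∀ k, ∫ x, p k x = 1) :
    ∫ θ : Fin d → ℝ, ∏ k, p k (θ k) = 1 := by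
  rw [integral_fintype_prod_volume_eq_prod]
  simp [hp1]

lemma integrable_prod (hInt : ∀ k, Integrable (p k)) :
    Integrable (fun θ : Fin d → ℝ => ∏ k, p k (θ k)) :=
  Integrable.fintype_prod hInt


end C
section D
variable {d : ℕ} (μ : Fin d → ℝ) (Γ : Matrix (Fin d) (Fin d) ℝ)

/-- The constant in `log (G/P)`. -/
noncomputable def KK : ℝ :=
  (∑ j, -Real.log (Real.sqrt (2 * Real.pi * (Γ j j)⁻¹)))
    - Real.log (Real.sqrt (Γ.det / (2 * Real.pi) ^ d))

lemma mvGaussPDF_pos (hdet : 0 < Γ.det) (θ : Fin d → ℝ) : 0 < mvGaussPDF μ Γ θ :=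
  mul_pos (Real.sqrt_pos.2 (by positivity)) (Real.exp_pos _)

lemma quad_expand (θ : Fin d → ℝ) :
    (θ - μ) ⬝ᵥ Γ.mulVec (θ - μ)
      = ∑ i, ∑ j, Γ i j * ((θ i - μ i) * (θ j - μ j)) := by
  simp only [dotProduct, Matrix.mulVec, Pi.sub_apply, Finset.mul_sum]
  refine Finset.sum_congr rfl fun i _ => ?_
  refine Finset.sum_congr rfl fun j _ => ?_
  ring

lemma log_GP (hb : ∀ j, 0 < Γ j j) (hdet : 0 < Γ.det) (θ : Fin d → ℝ) :
    Real.log ((∏ j, gaussPDF (μ j) (Γ j j)⁻¹ (θ j)) / mvGaussPDF μ Γ θ)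
      = KK Γ + (1 / 2) * ((θ - μ) ⬝ᵥ Γ.mulVec (θ - μ))
        - (1 / 2) * ∑ j, Γ j j * ((θ j - μ j) * (θ j - μ j)) := by
  have hGpos : (0:ℝ) < ∏ j, gaussPDF (μ j) (Γ j j)⁻¹ (θ j) :=
    Finset.prod_pos fun j _ => gaussPDF_pos (inv_pos.2 (hb j)) _
  rw [Real.log_div hGpos.ne' (mvGaussPDF_pos μ Γ hdet θ).ne']
  have hlogG : Real.log (∏ j, gaussPDF (μ j) (Γ j j)⁻¹ (θ j))
      = (∑ j, -Real.log (Real.sqrt (2 * Real.pi * (Γ j j)⁻¹)))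
        - (1 / 2) * ∑ j, Γ j j * ((θ j - μ j) * (θ j - μ j)) := by
    rw [Real.log_prod (fun j _ => (gaussPDF_pos (inv_pos.2 (hb j)) _).ne')]
    have h : ∀ j : Fin d, Real.log (gaussPDF (μ j) (Γ j j)⁻¹ (θ j))
        = -Real.log (Real.sqrt (2 * Real.pi * (Γ j j)⁻¹))
          - (1 / 2) * (Γ j j * ((θ j - μ j) * (θ j - μ j))) := by
      intro j
      rw [log_gaussPDF (inv_pos.2 (hb j))]
      have hne : Γ j j ≠ 0 := (hb j).ne'
      field_simp
      ring
    rw [Finset.sum_congr rfl (fun j _ => h j), Finset.sum_sub_distrib, ← Finset.mul_sum]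
  have hlogP : Real.log (mvGaussPDF μ Γ θ)
      = Real.log (Real.sqrt (Γ.det / (2 * Real.pi) ^ d))
        - (1 / 2) * ((θ - μ) ⬝ᵥ Γ.mulVec (θ - μ)) := by
    rw [mvGaussPDF, Real.log_mul (Real.sqrt_ne_zero'.2 (by positivity)) (Real.exp_ne_zero _),
      Real.log_exp]
    ring
  rw [hlogG, hlogP, KK]
  ring

lemma dot_expand (v : Fin d → ℝ) :
    v ⬝ᵥ Γ.mulVec v = ∑ i, ∑ j, Γ i j * (v i * v j) := by
  simp only [dotProduct, Matrix.mulVec, Finset.mul_sum]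
  refine Finset.sum_congr rfl fun i _ => ?_
  refine Finset.sum_congr rfl fun j _ => ?_
  ring

section Main

variable (p : Fin d → ℝ → ℝ)
variable (hb : ∀ j, 0 < Γ j j) (hdet : 0 < Γ.det)
variable (hInt : ∀ k, Integrable (p k))
variable (hM1 : ∀ k, Integrable (fun x => (x - μ k) * p k x))
variable (hM2 : ∀ k, Integrable (fun x => (x - μ k) * ((x - μ k) * p k x)))
variable (hp1 : ∀ k, ∫ x, p k x = 1)

include hInt hM1 hM2 in
lemma integrable_pair_prod' (i j : Fin d) :
    Integrable (fun θ : Fin d → ℝ => (θ i - μ i) * ((θ j - μ j) * ∏ k, p k (θ k))) :=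
  integrable_pair_prod p μ i j hInt hM1 hM2

include hInt hM1 hM2 hp1 in
lemma integral_pair_prod' {i j : Fin d} (hij : i ≠ j) :
    ∫ θ : Fin d → ℝ, (θ i - μ i) * ((θ j - μ j) * ∏ k, p k (θ k))
      = (∫ x, (x - μ i) * p i x) * ∫ x, (x - μ j) * p j x :=
  integral_pair_prod p μ hij hInt hM1 hM2 hp1

include hInt hp1 in
lemma integral_prod_eq_one' : ∫ θ : Fin d → ℝ, ∏ k, p k (θ k) = 1 :=
  integral_prod_eq_one p hInt hp1

include hInt in
lemma integrable_prod' : Integrable (fun θ : Fin d → ℝ => ∏ k, p k (θ k)) :=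
  integrable_prod p hInt

include hb hdet hInt hM1 hM2 in
lemma integrable_mul_logGP :
    Integrable (fun θ : Fin d → ℝ => (∏ k, p k (θ k))
      * Real.log ((∏ j, gaussPDF (μ j) (Γ j j)⁻¹ (θ j)) / mvGaussPDF μ Γ θ)) := by
  have Ipair : ∀ i j : Fin d,
      Integrable (fun θ : Fin d → ℝ => (θ i - μ i) * ((θ j - μ j) * ∏ k, p k (θ k))) :=
    fun i j => integrable_pair_prod' μ p hInt hM1 hM2 i j
  have IpairS : Integrable (fun θ : Fin d → ℝ =>
      ∑ i, ∑ j, Γ i j * ((θ i - μ i) * ((θ j - μ j) * ∏ k, p k (θ k)))) :=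
    integrable_finset_sum _ fun i _ =>
      integrable_finset_sum _ fun j _ => (Ipair i j).const_mul _
  have Idiag : Integrable (fun θ : Fin d → ℝ =>
      ∑ j, Γ j j * ((θ j - μ j) * ((θ j - μ j) * ∏ k, p k (θ k)))) :=
    integrable_finset_sum _ fun j _ => (Ipair j j).const_mul _
  have IPr : Integrable (fun θ : Fin d → ℝ => ∏ k, p k (θ k)) := integrable_prod' p hInt
  have h : Integrable (fun θ : Fin d → ℝ =>
      KK Γ * (∏ k, p k (θ k))
        + (1/2) * (∑ i, ∑ j, Γ i j * ((θ i - μ i) * ((θ j - μ j) * ∏ k, p k (θ k))))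
        - (1/2) * (∑ j, Γ j j * ((θ j - μ j) * ((θ j - μ j) * ∏ k, p k (θ k))))) :=
    ((IPr.const_mul _).add (IpairS.const_mul _)).sub (Idiag.const_mul _)
  refine h.congr ?_
  filter_upwards with θ
  rw [log_GP μ Γ hb hdet θ, quad_expand μ Γ θ]
  have h1 : ∑ i, ∑ j, Γ i j * ((θ i - μ i) * ((θ j - μ j) * ∏ k, p k (θ k)))
      = (∑ i, ∑ j, Γ i j * ((θ i - μ i) * (θ j - μ j))) * ∏ k, p k (θ k) := by
    rw [Finset.sum_mul]
    refine Finset.sum_congr rfl fun i _ => ?_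
    rw [Finset.sum_mul]
    refine Finset.sum_congr rfl fun j _ => ?_
    ring
  have h2 : ∑ j, Γ j j * ((θ j - μ j) * ((θ j - μ j) * ∏ k, p k (θ k)))
      = (∑ j, Γ j j * ((θ j - μ j) * (θ j - μ j))) * ∏ k, p k (θ k) := by
    rw [Finset.sum_mul]
    refine Finset.sum_congr rfl fun j _ => ?_
    ring
  rw [h1, h2]
  ring

include hb hdet hInt hM1 hM2 hp1 in
lemma integral_mul_logGP :
    ∫ θ : Fin d → ℝ, (∏ k, p k (θ k))
        * Real.log ((∏ j, gaussPDF (μ j) (Γ j j)⁻¹ (θ j)) / mvGaussPDF μ Γ θ)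
      = KK Γ + (1/2) * (((fun k => ∫ x, (x - μ k) * p k x) ⬝ᵥ
            Γ.mulVec (fun k => ∫ x, (x - μ k) * p k x))
          - ∑ j, Γ j j * ((∫ x, (x - μ j) * p j x) * ∫ x, (x - μ j) * p j x)) := by
  set M : Fin d → ℝ := fun k => ∫ x, (x - μ k) * p k x with hM
  set V : Fin d → Fin d → ℝ :=
    fun i j => ∫ θ : Fin d → ℝ, (θ i - μ i) * ((θ j - μ j) * ∏ k, p k (θ k)) with hV
  have Ipair : ∀ i j : Fin d,
      Integrable (fun θ : Fin d → ℝ => (θ i - μ i) * ((θ j - μ j) * ∏ k, p k (θ k))) :=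
    fun i j => integrable_pair_prod' μ p hInt hM1 hM2 i j
  have IpairS : Integrable (fun θ : Fin d → ℝ =>
      ∑ i, ∑ j, Γ i j * ((θ i - μ i) * ((θ j - μ j) * ∏ k, p k (θ k)))) :=
    integrable_finset_sum _ fun i _ =>
      integrable_finset_sum _ fun j _ => (Ipair i j).const_mul _
  have Idiag : Integrable (fun θ : Fin d → ℝ =>
      ∑ j, Γ j j * ((θ j - μ j) * ((θ j - μ j) * ∏ k, p k (θ k)))) :=
    integrable_finset_sum _ fun j _ => (Ipair j j).const_mul _
  have IPr : Integrable (fun θ : Fin d → ℝ => ∏ k, p k (θ k)) := integrable_prod' p hInt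
  have hpt : (fun θ : Fin d → ℝ => (∏ k, p k (θ k))
      * Real.log ((∏ j, gaussPDF (μ j) (Γ j j)⁻¹ (θ j)) / mvGaussPDF μ Γ θ))
      = fun θ : Fin d → ℝ =>
        KK Γ * (∏ k, p k (θ k))
          + (1/2) * (∑ i, ∑ j, Γ i j * ((θ i - μ i) * ((θ j - μ j) * ∏ k, p k (θ k))))
          - (1/2) * (∑ j, Γ j j * ((θ j - μ j) * ((θ j - μ j) * ∏ k, p k (θ k)))) := by
    funext θ
    rw [log_GP μ Γ hb hdet θ, quad_expand μ Γ θ]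
    have h1 : ∑ i, ∑ j, Γ i j * ((θ i - μ i) * ((θ j - μ j) * ∏ k, p k (θ k)))
        = (∑ i, ∑ j, Γ i j * ((θ i - μ i) * (θ j - μ j))) * ∏ k, p k (θ k) := by
      rw [Finset.sum_mul]
      refine Finset.sum_congr rfl fun i _ => ?_
      rw [Finset.sum_mul]
      refine Finset.sum_congr rfl fun j _ => ?_
      ring
    have h2 : ∑ j, Γ j j * ((θ j - μ j) * ((θ j - μ j) * ∏ k, p k (θ k)))
        = (∑ j, Γ j j * ((θ j - μ j) * (θ j - μ j))) * ∏ k, p k (θ k) := by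
      rw [Finset.sum_mul]
      refine Finset.sum_congr rfl fun j _ => ?_
      ring
    rw [h1, h2]
    ring
  have IA : Integrable (fun θ : Fin d → ℝ => KK Γ * (∏ k, p k (θ k))) := IPr.const_mul _
  have IB : Integrable (fun θ : Fin d → ℝ =>
      (1/2) * (∑ i, ∑ j, Γ i j * ((θ i - μ i) * ((θ j - μ j) * ∏ k, p k (θ k))))) :=
    IpairS.const_mul _
  have IC : Integrable (fun θ : Fin d → ℝ =>
      (1/2) * (∑ j, Γ j j * ((θ j - μ j) * ((θ j - μ j) * ∏ k, p k (θ k))))) :=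
    Idiag.const_mul _
  have IAB : Integrable (fun θ : Fin d → ℝ => KK Γ * (∏ k, p k (θ k))
      + (1/2) * (∑ i, ∑ j, Γ i j * ((θ i - μ i) * ((θ j - μ j) * ∏ k, p k (θ k))))) :=
    IA.add IB
  rw [hpt, integral_sub IAB IC, integral_add IA IB, integral_const_mul, integral_const_mul,
    integral_const_mul, integral_prod_eq_one' p hInt hp1]
  have hS1 : ∫ θ : Fin d → ℝ, ∑ i, ∑ j, Γ i j * ((θ i - μ i) * ((θ j - μ j) * ∏ k, p k (θ k)))
      = ∑ i, ∑ j, Γ i j * V i j := by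
    rw [integral_finset_sum _ (f := fun i (θ : Fin d → ℝ) =>
      ∑ j, Γ i j * ((θ i - μ i) * ((θ j - μ j) * ∏ k, p k (θ k)))) (fun i _ =>
      integrable_finset_sum _ fun j _ => (Ipair i j).const_mul _)]
    refine Finset.sum_congr rfl fun i _ => ?_
    rw [integral_finset_sum _ (f := fun j (θ : Fin d → ℝ) =>
      Γ i j * ((θ i - μ i) * ((θ j - μ j) * ∏ k, p k (θ k)))) (fun j _ => (Ipair i j).const_mul _)]
    refine Finset.sum_congr rfl fun j _ => ?_
    exact integral_const_mul _ _
  have hS2 : ∫ θ : Fin d → ℝ, ∑ j, Γ j j * ((θ j - μ j) * ((θ j - μ j) * ∏ k, p k (θ k)))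
      = ∑ j, Γ j j * V j j := by
    rw [integral_finset_sum _ (f := fun j (θ : Fin d → ℝ) =>
      Γ j j * ((θ j - μ j) * ((θ j - μ j) * ∏ k, p k (θ k)))) (fun j _ => (Ipair j j).const_mul _)]
    refine Finset.sum_congr rfl fun j _ => ?_
    exact integral_const_mul _ _
  rw [hS1, hS2]
  have hVoff : ∀ i j : Fin d, i ≠ j → V i j = M i * M j := by
    intro i j hij
    exact integral_pair_prod' μ p hInt hM1 hM2 hp1 hij
  have hkey : ∑ i, ∑ j, Γ i j * V i j
      = (∑ i, ∑ j, Γ i j * (M i * M j)) + ∑ i, Γ i i * (V i i - M i * M i) := by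
    have hterm : ∀ i j : Fin d, Γ i j * V i j
        = Γ i j * (M i * M j) + (if j = i then Γ i i * (V i i - M i * M i) else 0) := by
      intro i j
      by_cases h : j = i
      · subst h; rw [if_pos rfl]; ring
      · rw [hVoff i j (Ne.symm h), if_neg h, add_zero]
    calc ∑ i, ∑ j, Γ i j * V i j
        = ∑ i, ∑ j, (Γ i j * (M i * M j)
            + if j = i then Γ i i * (V i i - M i * M i) else 0) :=
          Finset.sum_congr rfl fun i _ => Finset.sum_congr rfl fun j _ => hterm i j
      _ = ∑ i, ((∑ j, Γ i j * (M i * M j)) + Γ i i * (V i i - M i * M i)) := by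
          refine Finset.sum_congr rfl fun i _ => ?_
          rw [Finset.sum_add_distrib, Finset.sum_ite_eq' Finset.univ i
            (fun _ => Γ i i * (V i i - M i * M i))]
          simp
      _ = _ := Finset.sum_add_distrib
  have hdot : M ⬝ᵥ Γ.mulVec M = ∑ i, ∑ j, Γ i j * (M i * M j) := dot_expand Γ M
  rw [hkey, hdot]
  have hsplit : ∑ i, Γ i i * (V i i - M i * M i)
      = ∑ i, Γ i i * V i i - ∑ i, Γ i i * (M i * M i) := by
    rw [← Finset.sum_sub_distrib]
    refine Finset.sum_congr rfl fun i _ => ?_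
    ring
  rw [hsplit]
  ring

end Main

end D
section E


variable {d : ℕ} {Γ : Matrix (Fin d) (Fin d) ℝ}

lemma dotProduct_self_nonneg (v : Fin d → ℝ) : 0 ≤ v ⬝ᵥ v :=
  Finset.sum_nonneg fun i _ => mul_self_nonneg _

lemma dotProduct_self_pos {v : Fin d → ℝ} (hv : v ≠ 0) : 0 < v ⬝ᵥ v := by
  obtain ⟨i, hi⟩ := Function.ne_iff.1 hv
  have hi' : v i ≠ 0 := by simpa using hi
  exact Finset.sum_pos' (fun j _ => mul_self_nonneg _)
    ⟨i, Finset.mem_univ i, mul_self_pos.2 hi'⟩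

lemma posdef_quad_pos (hΓ : Γ.PosDef) {v : Fin d → ℝ} (hv : v ≠ 0) :
    0 < v ⬝ᵥ Γ.mulVec v := by
  have := hΓ.dotProduct_mulVec_pos hv
  simpa using this

lemma exists_pos_lower_bound (hΓ : Γ.PosDef) (hd : d ≠ 0) :
    ∃ c : ℝ, 0 < c ∧ ∀ v : Fin d → ℝ, c * (v ⬝ᵥ v) ≤ v ⬝ᵥ Γ.mulVec v := by
  have hne : Nonempty (Fin d) := ⟨⟨0, Nat.pos_of_ne_zero hd⟩⟩
  obtain ⟨j0⟩ := hne
  set Sph : Set (Fin d → ℝ) := {v | v ⬝ᵥ v = 1} with hSph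
  have hcont2 : Continuous fun v : Fin d → ℝ => v ⬝ᵥ v := by
    simp only [dotProduct]
    exact continuous_finset_sum _ fun i _ => (continuous_apply i).mul (continuous_apply i)
  have hcont : Continuous fun v : Fin d → ℝ => v ⬝ᵥ Γ.mulVec v := by
    simp only [dotProduct, Matrix.mulVec]
    exact continuous_finset_sum _ fun i _ => (continuous_apply i).mul
      (continuous_finset_sum _ fun j _ => (continuous_const.mul (continuous_apply j)))
  have hclosed : IsClosed Sph := isClosed_eq hcont2 continuous_const
  have hbdd : Bornology.IsBounded Sph := by
    rw [Metric.isBounded_iff_subset_closedBall 0]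
    refine ⟨1, fun v hv => ?_⟩
    simp only [Metric.mem_closedBall, dist_zero_right]
    rw [pi_norm_le_iff_of_nonneg zero_le_one]
    intro i
    have h1 : v i * v i ≤ v ⬝ᵥ v :=
      Finset.single_le_sum (f := fun j => v j * v j)
        (fun j _ => mul_self_nonneg _) (Finset.mem_univ i)
    have hvv : v ⬝ᵥ v = 1 := hv
    rw [Real.norm_eq_abs, ← Real.sqrt_one, ← Real.sqrt_sq_eq_abs]
    apply Real.sqrt_le_sqrt
    nlinarith [h1, hvv]
  have hcpt : IsCompact Sph := Metric.isCompact_of_isClosed_isBounded hclosed hbdd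
  have hne' : Sph.Nonempty := by
    refine ⟨Pi.single j0 1, ?_⟩
    simp [hSph, dotProduct, Pi.single_apply]
  obtain ⟨v0, hv0S, hv0min⟩ := hcpt.exists_isMinOn hne' hcont.continuousOn
  have hv0ne : v0 ≠ 0 := by
    intro h
    rw [hSph] at hv0S
    simp only [Set.mem_setOf_eq, h] at hv0S
    simp [dotProduct] at hv0S
  refine ⟨v0 ⬝ᵥ Γ.mulVec v0, posdef_quad_pos hΓ hv0ne, fun v => ?_⟩
  rcases eq_or_ne v 0 with rfl | hv
  · simp
  · have hvv : 0 < v ⬝ᵥ v := dotProduct_self_pos hv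
    set t : ℝ := Real.sqrt (v ⬝ᵥ v) with ht
    have htpos : 0 < t := Real.sqrt_pos.2 hvv
    have ht2 : t * t = v ⬝ᵥ v := Real.mul_self_sqrt hvv.le
    have hu : (t⁻¹ • v) ∈ Sph := by
      simp only [hSph, Set.mem_setOf_eq, smul_dotProduct, dotProduct_smul, smul_eq_mul]
      field_simp
      nlinarith [ht2]
    have h1 : v0 ⬝ᵥ Γ.mulVec v0 ≤ (t⁻¹ • v) ⬝ᵥ Γ.mulVec (t⁻¹ • v) := hv0min hu
    rw [Matrix.mulVec_smul, smul_dotProduct, dotProduct_smul, smul_eq_mul, smul_eq_mul] at h1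
    have h2 : (v0 ⬝ᵥ Γ.mulVec v0) * (t * t) ≤ v ⬝ᵥ Γ.mulVec v := by
      have := mul_le_mul_of_nonneg_left h1 (mul_pos htpos htpos).le
      calc (v0 ⬝ᵥ Γ.mulVec v0) * (t * t) = (t * t) * (v0 ⬝ᵥ Γ.mulVec v0) := by ring
        _ ≤ (t * t) * (t⁻¹ * (t⁻¹ * (v ⬝ᵥ Γ.mulVec v))) := this
        _ = v ⬝ᵥ Γ.mulVec v := by field_simp
    rw [ht2] at h2
    exact h2


end E

lemma mul_log_split {a G P : ℝ} (ha : 0 ≤ a) (hG : 0 < G) (hP : 0 < P) :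
    a * Real.log (a / P) = a * Real.log (a / G) + a * Real.log (G / P) := by
  rcases eq_or_lt_of_le ha with h | h
  · simp [← h]
  · rw [Real.log_div h.ne' hP.ne', Real.log_div h.ne' hG.ne', Real.log_div hG.ne' hP.ne']
    ring

end KLaux

theorem kl_product_gaussian_triangle {d : ℕ}
    (q : Fin d → ℝ → ℝ) (μ : Fin d → ℝ) (Γ : Matrix (Fin d) (Fin d) ℝ)
    (hΓ : Γ.PosDef)
    (lamMin : ℝ)
    (hlam : IsGreatest {c : ℝ | ∀ v : Fin d → ℝ, c * (v ⬝ᵥ v) ≤ v ⬝ᵥ Γ.mulVec v} lamMin)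
    (gamMax : ℝ) (hgam : IsGreatest (Set.range fun j => Γ j j) gamMax)
    (hqmeas : ∀ j, Measurable (q j))
    (hq0 : ∀ j x, 0 ≤ q j x)
    (hq1 : ∀ j, ∫ x, q j x = 1)
    (hqm1 : ∀ j, Integrable (fun x => x * q j x))
    (hqm2 : ∀ j, Integrable (fun x => x ^ 2 * q j x))
    (hent : ∀ j, Integrable (fun x => q j x * Real.log (q j x)))
    (hKL1 : Integrable (fun θ : Fin d → ℝ =>
      (∏ j, q j (θ j)) * Real.log ((∏ j, q j (θ j)) / mvGaussPDF μ Γ θ)))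
    (hKL2 : Integrable (fun θ : Fin d → ℝ =>
      (∏ j, gaussPDF (μ j) (Γ j j)⁻¹ (θ j)) *
        Real.log ((∏ j, gaussPDF (μ j) (Γ j j)⁻¹ (θ j)) / mvGaussPDF μ Γ θ)))
    (hKL3 : Integrable (fun θ : Fin d → ℝ =>
      (∏ j, q j (θ j)) *
        Real.log ((∏ j, q j (θ j)) / ∏ j, gaussPDF (μ j) (Γ j j)⁻¹ (θ j)))) :
    (∫ θ : Fin d → ℝ, (∏ j, q j (θ j)) *
        Real.log ((∏ j, q j (θ j)) / ∏ j, gaussPDF (μ j) (Γ j j)⁻¹ (θ j)))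
      ≤ (gamMax / lamMin) *
        ((∫ θ : Fin d → ℝ, (∏ j, q j (θ j)) *
            Real.log ((∏ j, q j (θ j)) / mvGaussPDF μ Γ θ))
          - ∫ θ : Fin d → ℝ, (∏ j, gaussPDF (μ j) (Γ j j)⁻¹ (θ j)) *
              Real.log ((∏ j, gaussPDF (μ j) (Γ j j)⁻¹ (θ j)) / mvGaussPDF μ Γ θ)) ∧
    (∫ θ : Fin d → ℝ, (∏ j, gaussPDF (μ j) (Γ j j)⁻¹ (θ j)) *
        Real.log ((∏ j, gaussPDF (μ j) (Γ j j)⁻¹ (θ j)) / mvGaussPDF μ Γ θ))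
      ≤ ∫ θ : Fin d → ℝ, (∏ j, q j (θ j)) *
          Real.log ((∏ j, q j (θ j)) / mvGaussPDF μ Γ θ) := by
  classical
  -- dimension is nonzero
  have hd : d ≠ 0 := by
    rintro rfl
    have h1 : (lamMin + 1) ∈ {c : ℝ | ∀ v : Fin 0 → ℝ, c * (v ⬝ᵥ v) ≤ v ⬝ᵥ Γ.mulVec v} := by
      intro v
      have h2 : v ⬝ᵥ v = 0 := by simp [dotProduct]
      have h3 : v ⬝ᵥ Γ.mulVec v = 0 := by simp [dotProduct]
      rw [h2, h3, mul_zero]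
    have := hlam.2 h1
    linarith
  -- diagonal entries are positive
  have hsingle : ∀ j : Fin d, (Pi.single j 1 : Fin d → ℝ) ≠ 0 := by
    intro j h
    have h2 := congrFun h j
    simp at h2
  have hsingle_quad : ∀ j : Fin d,
      (Pi.single j 1 : Fin d → ℝ) ⬝ᵥ Γ.mulVec (Pi.single j 1) = Γ j j := by
    intro j
    rw [Matrix.mulVec_single, single_dotProduct]
    simp
  have hsingle_self : ∀ j : Fin d, (Pi.single j 1 : Fin d → ℝ) ⬝ᵥ (Pi.single j 1) = 1 := by
    intro j
    rw [single_dotProduct]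
    simp
  have hb : ∀ j, 0 < Γ j j := by
    intro j
    have h := KLaux.posdef_quad_pos hΓ (hsingle j)
    rwa [hsingle_quad j] at h
  have hdet : (0:ℝ) < Γ.det := hΓ.det_pos
  have hs2 : ∀ j, (0:ℝ) < (Γ j j)⁻¹ := fun j => inv_pos.2 (hb j)
  -- integrability facts for q
  have qInt : ∀ j, Integrable (q j) := by
    intro j
    by_contra h
    have h1 := hq1 j
    rw [integral_undef h] at h1
    exact one_ne_zero h1.symm
  have qM1 : ∀ k, Integrable (fun x => (x - μ k) * q k x) := by
    intro k
    have h : Integrable (fun x => x * q k x - μ k * q k x) :=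
      (hqm1 k).sub ((qInt k).const_mul _)
    refine h.congr ?_
    filter_upwards with x
    ring
  have qM2 : ∀ k, Integrable (fun x => (x - μ k) * ((x - μ k) * q k x)) := by
    intro k
    have h := KLaux.integrable_sub_sq_mul (q k) (qInt k) (hqm1 k) (hqm2 k) (μ k)
    refine h.congr ?_
    filter_upwards with x
    ring
  -- integrability facts for the gaussians
  have gInt : ∀ k, Integrable (fun x => gaussPDF (μ k) (Γ k k)⁻¹ x) :=
    fun k => KLaux.integrable_gaussPDF (hs2 k)
  have g1 : ∀ k, ∫ x, gaussPDF (μ k) (Γ k k)⁻¹ x = 1 :=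
    fun k => KLaux.integral_gaussPDF (hs2 k)
  have gM1 : ∀ k, Integrable (fun x => (x - μ k) * gaussPDF (μ k) (Γ k k)⁻¹ x) :=
    fun k => KLaux.integrable_sub_mul_gaussPDF (hs2 k)
  have gM2 : ∀ k, Integrable (fun x => (x - μ k) * ((x - μ k) * gaussPDF (μ k) (Γ k k)⁻¹ x)) := by
    intro k
    have h := KLaux.integrable_sub_sq_mul_gaussPDF (m := μ k) (hs2 k)
    refine h.congr ?_
    filter_upwards with x
    ring
  have gM1z : ∀ k, ∫ x, (x - μ k) * gaussPDF (μ k) (Γ k k)⁻¹ x = 0 :=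
    fun k => KLaux.integral_sub_mul_gaussPDF (hs2 k)
  -- positivity
  have hGpos : ∀ θ : Fin d → ℝ, (0:ℝ) < ∏ j, gaussPDF (μ j) (Γ j j)⁻¹ (θ j) :=
    fun θ => Finset.prod_pos fun j _ => KLaux.gaussPDF_pos (hs2 j) _
  have hPpos : ∀ θ : Fin d → ℝ, 0 < mvGaussPDF μ Γ θ := KLaux.mvGaussPDF_pos μ Γ hdet
  have hQ0 : ∀ θ : Fin d → ℝ, (0:ℝ) ≤ ∏ j, q j (θ j) :=
    fun θ => Finset.prod_nonneg fun j _ => hq0 j _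
  -- value of B
  have hB : ∫ θ : Fin d → ℝ, (∏ j, gaussPDF (μ j) (Γ j j)⁻¹ (θ j)) *
      Real.log ((∏ j, gaussPDF (μ j) (Γ j j)⁻¹ (θ j)) / mvGaussPDF μ Γ θ) = KLaux.KK Γ := by
    rw [KLaux.integral_mul_logGP μ Γ (fun k x => gaussPDF (μ k) (Γ k k)⁻¹ x) hb hdet gInt gM1
      gM2 g1]
    simp only [gM1z]
    have h0 : (fun _ : Fin d => (0:ℝ)) = 0 := rfl
    rw [h0, Matrix.mulVec_zero, dotProduct_zero]
    simp
  -- splitting of A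
  have Eint : Integrable (fun θ : Fin d → ℝ => (∏ j, q j (θ j)) *
      Real.log ((∏ j, gaussPDF (μ j) (Γ j j)⁻¹ (θ j)) / mvGaussPDF μ Γ θ)) :=
    KLaux.integrable_mul_logGP μ Γ q hb hdet qInt qM1 qM2
  have hAsplit : ∫ θ : Fin d → ℝ, (∏ j, q j (θ j)) *
        Real.log ((∏ j, q j (θ j)) / mvGaussPDF μ Γ θ)
      = (∫ θ : Fin d → ℝ, (∏ j, q j (θ j)) *
          Real.log ((∏ j, q j (θ j)) / ∏ j, gaussPDF (μ j) (Γ j j)⁻¹ (θ j)))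
        + ∫ θ : Fin d → ℝ, (∏ j, q j (θ j)) *
            Real.log ((∏ j, gaussPDF (μ j) (Γ j j)⁻¹ (θ j)) / mvGaussPDF μ Γ θ) := by
    rw [← integral_add hKL3 Eint]
    refine integral_congr_ae ?_
    filter_upwards with θ
    exact KLaux.mul_log_split (hQ0 θ) (hGpos θ) (hPpos θ)
  have hE := KLaux.integral_mul_logGP μ Γ q hb hdet qInt qM1 qM2 hq1
  rw [hE] at hAsplit
  -- decomposition of C as a sum of one-dimensional divergences
  have hw : ∀ j, Integrable (fun x =>
      Real.log (q j x / gaussPDF (μ j) (Γ j j)⁻¹ x) * q j x) := by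
    intro j
    have h := KLaux.integrable_mul_log_div_gauss (hs2 j) (q j) (hq0 j) (qInt j) (hqm1 j)
      (hqm2 j) (hent j) (μ j)
    refine h.congr ?_
    filter_upwards with x
    exact mul_comm _ _
  have hCeq : ∫ θ : Fin d → ℝ, (∏ j, q j (θ j)) *
        Real.log ((∏ j, q j (θ j)) / ∏ j, gaussPDF (μ j) (Γ j j)⁻¹ (θ j))
      = ∑ j, ∫ x, Real.log (q j x / gaussPDF (μ j) (Γ j j)⁻¹ x) * q j x := by
    have hpt : (fun θ : Fin d → ℝ => (∏ j, q j (θ j)) *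
          Real.log ((∏ j, q j (θ j)) / ∏ j, gaussPDF (μ j) (Γ j j)⁻¹ (θ j)))
        = fun θ : Fin d → ℝ =>
            ∑ j, Real.log (q j (θ j) / gaussPDF (μ j) (Γ j j)⁻¹ (θ j)) * ∏ k, q k (θ k) := by
      funext θ
      rcases eq_or_ne (∏ j, q j (θ j)) 0 with h | h
      · rw [h]
        simp [h]
      · have hqk : ∀ k, q k (θ k) ≠ 0 :=
          fun k hk => h (Finset.prod_eq_zero (Finset.mem_univ k) hk)
        rw [← Finset.prod_div_distrib, Real.log_prod
          (fun k _ => div_ne_zero (hqk k) (KLaux.gaussPDF_pos (hs2 k) _).ne'), Finset.mul_sum]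
        refine Finset.sum_congr rfl fun j _ => mul_comm _ _
    rw [hpt, integral_finset_sum _ (fun j _ => KLaux.integrable_single_prod q
      (fun x => Real.log (q j x / gaussPDF (μ j) (Γ j j)⁻¹ x)) j (hw j) qInt)]
    exact Finset.sum_congr rfl fun j _ => KLaux.integral_single_prod q
      (fun x => Real.log (q j x / gaussPDF (μ j) (Γ j j)⁻¹ x)) j (hw j) qInt hq1
  -- one-dimensional lower bound on each divergence
  have hcj : ∀ j : Fin d,
      Γ j j * ((∫ x, (x - μ j) * q j x) * ∫ x, (x - μ j) * q j x) / 2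
        ≤ ∫ x, Real.log (q j x / gaussPDF (μ j) (Γ j j)⁻¹ x) * q j x := by
    intro j
    have h1 := KLaux.oneDimKL (hs2 j) (q j) (hq0 j) (qInt j) (hq1 j) (hqm1 j) (hqm2 j)
      (hent j) (μ j)
    have h2 : ∫ x, Real.log (q j x / gaussPDF (μ j) (Γ j j)⁻¹ x) * q j x
        = ∫ x, q j x * Real.log (q j x / gaussPDF (μ j) (Γ j j)⁻¹ x) := by
      refine integral_congr_ae ?_
      filter_upwards with x
      exact mul_comm _ _
    have h3 : ∫ x, (x - μ j) * q j x = (∫ x, x * q j x) - μ j := by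
      have hf : (fun x => (x - μ j) * q j x) = fun x => x * q j x - μ j * q j x := by
        funext x
        ring
      rw [hf, integral_sub (hqm1 j) ((qInt j).const_mul _), integral_const_mul, hq1 j, mul_one]
    have hne : Γ j j ≠ 0 := (hb j).ne'
    have h4 : Γ j j * (((∫ x, x * q j x) - μ j) * ((∫ x, x * q j x) - μ j)) / 2
        = ((∫ x, x * q j x) - μ j) ^ 2 / (2 * (Γ j j)⁻¹) := by
      field_simp
    rw [h2, h3, h4]
    exact h1
  have hCS : (∑ j, Γ j j * ((∫ x, (x - μ j) * q j x) * ∫ x, (x - μ j) * q j x)) / 2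
      ≤ ∫ θ : Fin d → ℝ, (∏ j, q j (θ j)) *
          Real.log ((∏ j, q j (θ j)) / ∏ j, gaussPDF (μ j) (Γ j j)⁻¹ (θ j)) := by
    rw [hCeq, Finset.sum_div]
    exact Finset.sum_le_sum fun j _ => hcj j
  -- spectral facts
  obtain ⟨c, hc0, hcmem⟩ := KLaux.exists_pos_lower_bound hΓ hd
  have hlam0 : 0 < lamMin := lt_of_lt_of_le hc0 (hlam.2 hcmem)
  have hlamle : ∀ j, lamMin ≤ Γ j j := by
    intro j
    have h := hlam.1 (Pi.single j 1)
    rwa [hsingle_quad j, hsingle_self j, mul_one] at h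
  have hgamle : lamMin ≤ gamMax := by
    obtain ⟨j, hj⟩ := hgam.1
    exact hj ▸ hlamle j
  have hgamub : ∀ j, Γ j j ≤ gamMax := fun j => hgam.2 ⟨j, rfl⟩
  have hT := hlam.1 (fun k => ∫ x, (x - μ k) * q k x)
  have hN : (0:ℝ) ≤ (fun k => ∫ x, (x - μ k) * q k x) ⬝ᵥ (fun k => ∫ x, (x - μ k) * q k x) :=
    KLaux.dotProduct_self_nonneg _
  have hSle : (∑ j, Γ j j * ((∫ x, (x - μ j) * q j x) * ∫ x, (x - μ j) * q j x))
      ≤ gamMax * ((fun k => ∫ x, (x - μ k) * q k x) ⬝ᵥ (fun k => ∫ x, (x - μ k) * q k x)) := by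
    have hdd : (fun k => ∫ x, (x - μ k) * q k x) ⬝ᵥ (fun k => ∫ x, (x - μ k) * q k x)
        = ∑ j, (∫ x, (x - μ j) * q j x) * ∫ x, (x - μ j) * q j x := rfl
    rw [hdd, Finset.mul_sum]
    exact Finset.sum_le_sum fun j _ =>
      mul_le_mul_of_nonneg_right (hgamub j) (mul_self_nonneg _)
  have hr1 : (1:ℝ) ≤ gamMax / lamMin := (one_le_div hlam0).2 hgamle
  have hrl : gamMax / lamMin * lamMin = gamMax := div_mul_cancel₀ _ hlam0.ne'
  -- final algebra
  rw [hAsplit, hB]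
  set Cv := ∫ θ : Fin d → ℝ, (∏ j, q j (θ j)) *
      Real.log ((∏ j, q j (θ j)) / ∏ j, gaussPDF (μ j) (Γ j j)⁻¹ (θ j)) with hCv
  set T := (fun k => ∫ x, (x - μ k) * q k x) ⬝ᵥ
      Γ.mulVec (fun k => ∫ x, (x - μ k) * q k x) with hTdef
  set S := ∑ j, Γ j j * ((∫ x, (x - μ j) * q j x) * ∫ x, (x - μ j) * q j x) with hSdef
  set N := (fun k => ∫ x, (x - μ k) * q k x) ⬝ᵥ (fun k => ∫ x, (x - μ k) * q k x) with hNdef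
  have h2 : 0 ≤ gamMax / lamMin * (T - lamMin * N) :=
    mul_nonneg (by linarith) (by linarith [hT])
  have hexp : gamMax / lamMin * (T - lamMin * N) = gamMax / lamMin * T - gamMax * N := by
    rw [mul_sub, ← mul_assoc, hrl]
  rw [hexp] at h2
  have h1 : 0 ≤ (gamMax / lamMin - 1) * (Cv - S / 2) :=
    mul_nonneg (by linarith) (by linarith [hCS])
  constructor
  · nlinarith [h1, h2, hSle, hCS]
  · nlinarith [hCS, hT, mul_nonneg hlam0.le hN, hSle]
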